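/- In the random orientation model on the complete graph Γ on r vertices with parameter m ≥ 3, the probability of the event that [either no vertex is ascending, or some two distinct ascending vertices v_1, v_2 have no vertex v_3 ascending with both edges (v_1,v_3), (v_2,v_3) ascending] or [either no vertex is descending, or some two distinct descending vertices v_1, v_2 have no vertex v_3 descending with both edges (v_1,v_3), (v_2,v_3) descending] is at most 1/2^{r−1} + C(r,2) · (1/2) · (1 − 1/2^{2m−3})^{r−2}. -/

import Mathlib

/-- Sample space of the random orientation model on the complete graph on `r` vertices
with parameter `m`: one fair coin per vertex (`true` = ascending) and `m − 2` fair bits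
per edge, all independent and uniform; modelled by the uniform measure on this finite
type. -/
abbrev RandomOrientation (r m : ℕ) : Type :=
  (Fin r → Bool) × (Sym2 (Fin r) → Fin (m - 2) → Bool)

/-- The vertex `v` is ascending: its coin is heads. -/
def Asc {r m : ℕ} (ω : RandomOrientation r m) (v : Fin r) : Prop := ω.1 v = true

/-- The vertex `v` is descending: its coin is tails. -/
def Desc {r m : ℕ} (ω : RandomOrientation r m) (v : Fin r) : Prop := ω.1 v = false

/-- The edge `(u,v)` is ascending: both endpoints are ascending and all of its
`m − 2` bits are true. -/
def EdgeAsc {r m : ℕ} (ω : RandomOrientation r m) (u v : Fin r) : Prop :=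
  Asc ω u ∧ Asc ω v ∧ ∀ i, ω.2 s(u, v) i = true

/-- The edge `(u,v)` is descending: both endpoints are descending and all of its
`m − 2` bits are false. -/
def EdgeDesc {r m : ℕ} (ω : RandomOrientation r m) (u v : Fin r) : Prop :=
  Desc ω u ∧ Desc ω v ∧ ∀ i, ω.2 s(u, v) i = false

/-- The uniform probability of an event in the random orientation model. -/
noncomputable def pr {r m : ℕ} (E : Set (RandomOrientation r m)) : ℝ :=
  (Nat.card E : ℝ) / (Nat.card (RandomOrientation r m) : ℝ)

section Aux
variable {r m : ℕ}

lemma pr_eq (E : Set (RandomOrientation r m)) :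
    pr E = (E.ncard : ℝ) / (Nat.card (RandomOrientation r m) : ℝ) := by
  rw [pr, Nat.card_coe_set_eq]

lemma pr_nonneg (E : Set (RandomOrientation r m)) : 0 ≤ pr E :=
  div_nonneg (Nat.cast_nonneg _) (Nat.cast_nonneg _)

lemma pr_mono {E F : Set (RandomOrientation r m)} (h : E ⊆ F) : pr E ≤ pr F := by
  rw [pr_eq, pr_eq, div_le_div_iff_of_pos_right (by exact_mod_cast Nat.card_pos)]
  exact_mod_cast Set.ncard_le_ncard h (Set.toFinite F)

lemma pr_union_le (E F : Set (RandomOrientation r m)) : pr (E ∪ F) ≤ pr E + pr F := by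
  rw [pr_eq, pr_eq, pr_eq, ← add_div,
    div_le_div_iff_of_pos_right (by exact_mod_cast Nat.card_pos)]
  exact_mod_cast Set.ncard_union_le E F

lemma pr_biUnion_le {ι : Type*} (s : Finset ι) (E : ι → Set (RandomOrientation r m)) :
    pr (⋃ i ∈ s, E i) ≤ ∑ i ∈ s, pr (E i) := by
  induction s using Finset.cons_induction with
  | empty => simp [pr_eq]
  | cons a s ha ih =>
    rw [Finset.sum_cons]
    have hE : (⋃ i ∈ Finset.cons a s ha, E i) = E a ∪ ⋃ i ∈ s, E i := by
      simp [Finset.cons_eq_insert, Set.biUnion_insert]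
    rw [hE]
    exact le_trans (pr_union_le _ _) (add_le_add le_rfl ih)


end Aux

section Const
variable {r m : ℕ}

lemma pr_const_coin (t : Bool) :
    pr {ω : RandomOrientation r m | ∀ v, ω.1 v = t} = 1 / 2 ^ r := by
  have e : {ω : RandomOrientation r m | ∀ v, ω.1 v = t} ≃
      (Sym2 (Fin r) → Fin (m - 2) → Bool) :=
    { toFun := fun ω => ω.1.2
      invFun := fun b => ⟨((fun _ => t), b), fun v => rfl⟩
      left_inv := by
        rintro ⟨⟨c, b⟩, h⟩
        ext v <;> simp_all [Set.mem_setOf_eq] <;> exact (h v).symm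
      right_inv := fun b => rfl }
  have hB : (0:ℝ) < (Fintype.card (Sym2 (Fin r) → Fin (m - 2) → Bool) : ℝ) := by
    exact_mod_cast Fintype.card_pos
  have h1 : Nat.card {ω : RandomOrientation r m | ∀ v, ω.1 v = t} =
      Fintype.card (Sym2 (Fin r) → Fin (m - 2) → Bool) := by
    rw [Nat.card_congr e, Nat.card_eq_fintype_card]
  have h2 : Nat.card (RandomOrientation r m) =
      2 ^ r * Fintype.card (Sym2 (Fin r) → Fin (m - 2) → Bool) := by
    rw [Nat.card_eq_fintype_card, Fintype.card_prod]
    congr 1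
    simp [Fintype.card_fun]
  rw [pr, h1, h2]
  push_cast
  rw [div_eq_div_iff (by positivity) (by positivity)]
  ring

end Const

section Pair
variable {r m : ℕ}

/-- The remaining bits of an edge. -/
abbrev Beta (m : ℕ) := Fin (m - 2) → Bool

/-- The block of data attached to a third vertex. -/
abbrev Gam (m : ℕ) := Bool × Beta m × Beta m

/-- Edges not of the form `s(v₁,w)` or `s(v₂,w)` for `w` outside `{v₁, v₂}`. -/
def IsRest (v₁ v₂ : Fin r) (e : Sym2 (Fin r)) : Prop :=
  ∀ w : Fin r, w ≠ v₁ → w ≠ v₂ → e ≠ s(v₁, w) ∧ e ≠ s(v₂, w)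

/-- The product decomposition of the sample space adapted to a pair `v₁ v₂`. -/
def Target (r m : ℕ) (v₁ v₂ : Fin r) : Type :=
  Bool × Bool × ({v : Fin r // v ≠ v₁ ∧ v ≠ v₂} → Gam m) ×
    ({e : Sym2 (Fin r) // IsRest v₁ v₂ e} → Beta m)

def Phi (v₁ v₂ : Fin r) (ω : RandomOrientation r m) : Target r m v₁ v₂ :=
  (ω.1 v₁, ω.1 v₂,
   fun w => (ω.1 w.1, fun i => ω.2 s(v₁, w.1) i, fun i => ω.2 s(v₂, w.1) i),
   fun e => ω.2 e.1)

open scoped Classical in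
noncomputable def Psi (v₁ v₂ : Fin r) (x : Target r m v₁ v₂) : RandomOrientation r m :=
  (fun v => if h1 : v = v₁ then x.1 else if h2 : v = v₂ then x.2.1
      else (x.2.2.1 ⟨v, h1, h2⟩).1,
   fun e => if h1 : ∃ w : {v : Fin r // v ≠ v₁ ∧ v ≠ v₂}, e = s(v₁, w.1) then
        (x.2.2.1 h1.choose).2.1
      else if h2 : ∃ w : {v : Fin r // v ≠ v₁ ∧ v ≠ v₂}, e = s(v₂, w.1) then
        (x.2.2.1 h2.choose).2.2
      else if h3 : IsRest v₁ v₂ e then x.2.2.2 ⟨e, h3⟩ else fun _ => true)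

variable {v₁ v₂ : Fin r}

lemma e1_inj (h12 : v₁ ≠ v₂) {w w' : Fin r} (hw : w ≠ v₁) (he : s(v₁, w) = s(v₁, w')) :
    w = w' := by
  rcases Sym2.eq_iff.mp he with ⟨-, h⟩ | ⟨h1, h2⟩
  · exact h
  · exact absurd h2 hw

lemma e2_inj (h12 : v₁ ≠ v₂) {w w' : Fin r} (hw : w ≠ v₂) (he : s(v₂, w) = s(v₂, w')) :
    w = w' := by
  rcases Sym2.eq_iff.mp he with ⟨-, h⟩ | ⟨h1, h2⟩
  · exact h
  · exact absurd h2 hw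

lemma e1_ne_e2 (h12 : v₁ ≠ v₂) {w w' : Fin r} (hw : w ≠ v₂) (hw' : w' ≠ v₁) :
    s(v₁, w) ≠ s(v₂, w') := by
  intro he
  rcases Sym2.eq_iff.mp he with ⟨h1, -⟩ | ⟨h1, h2⟩
  · exact h12 h1
  · exact hw' h1.symm

lemma psi_phi (h12 : v₁ ≠ v₂) (ω : RandomOrientation r m) : Psi v₁ v₂ (Phi v₁ v₂ ω) = ω := by
  classical
  refine Prod.ext ?_ ?_
  · funext v
    simp only [Psi, Phi]
    split_ifs with h1 h2
    · rw [h1]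
    · rw [h2]
    · rfl
  · funext e
    simp only [Psi, Phi]
    split_ifs with h1 h2 h3
    · obtain hs := h1.choose_spec
      rw [← hs]
    · obtain hs := h2.choose_spec
      rw [← hs]
    · rfl
    · exfalso
      apply h3
      intro w hw1 hw2
      push_neg at h1 h2
      exact ⟨h1 ⟨w, hw1, hw2⟩, h2 ⟨w, hw1, hw2⟩⟩

lemma phi_psi (h12 : v₁ ≠ v₂) (x : Target r m v₁ v₂) : Phi v₁ v₂ (Psi v₁ v₂ x) = x := by
  classical
  obtain ⟨c1, c2, g, b⟩ := x
  simp only [Phi, Psi]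
  refine Prod.ext ?_ (Prod.ext ?_ (Prod.ext ?_ ?_))
  · simp
  · simp [Ne.symm h12]
  · funext w
    obtain ⟨w, hw1, hw2⟩ := w
    refine Prod.ext ?_ (Prod.ext ?_ ?_)
    · simp [hw1, hw2]
    · simp only
      have h1 : ∃ u : {v : Fin r // v ≠ v₁ ∧ v ≠ v₂}, s(v₁, w) = s(v₁, u.1) :=
        ⟨⟨w, hw1, hw2⟩, rfl⟩
      rw [dif_pos h1]
      have := h1.choose_spec
      have hcw : h1.choose = ⟨w, hw1, hw2⟩ :=
        Subtype.ext (e1_inj h12 h1.choose.2.1 this.symm)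
      rw [hcw]
    · simp only
      have h1 : ¬ ∃ u : {v : Fin r // v ≠ v₁ ∧ v ≠ v₂}, s(v₂, w) = s(v₁, u.1) := by
        rintro ⟨u, hu⟩
        exact e1_ne_e2 h12 u.2.2 hw1 hu.symm
      rw [dif_neg h1]
      have h2 : ∃ u : {v : Fin r // v ≠ v₁ ∧ v ≠ v₂}, s(v₂, w) = s(v₂, u.1) :=
        ⟨⟨w, hw1, hw2⟩, rfl⟩
      rw [dif_pos h2]
      have := h2.choose_spec
      have hcw : h2.choose = ⟨w, hw1, hw2⟩ :=
        Subtype.ext (e2_inj h12 h2.choose.2.2 this.symm)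
      rw [hcw]
  · funext e
    obtain ⟨e, he⟩ := e
    simp only
    have h1 : ¬ ∃ u : {v : Fin r // v ≠ v₁ ∧ v ≠ v₂}, e = s(v₁, u.1) := by
      rintro ⟨u, hu⟩
      exact (he u.1 u.2.1 u.2.2).1 hu
    have h2 : ¬ ∃ u : {v : Fin r // v ≠ v₁ ∧ v ≠ v₂}, e = s(v₂, u.1) := by
      rintro ⟨u, hu⟩
      exact (he u.1 u.2.1 u.2.2).2 hu
    rw [dif_neg h1, dif_neg h2, dif_pos he]

end Pair

section Count
variable {r m : ℕ} {v₁ v₂ : Fin r}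

noncomputable def PhiEquiv (h12 : v₁ ≠ v₂) : RandomOrientation r m ≃ Target r m v₁ v₂ :=
  ⟨Phi v₁ v₂, Psi v₁ v₂, psi_phi h12, phi_psi h12⟩

/-- A block is bad if the coin shows `t` and all bits of both edges are `t`. -/
def Bad (t : Bool) (g : Gam m) : Prop :=
  g.1 = t ∧ (∀ i, g.2.1 i = t) ∧ (∀ i, g.2.2 i = t)

lemma card_S (h12 : v₁ ≠ v₂) : Nat.card {v : Fin r // v ≠ v₁ ∧ v ≠ v₂} = r - 2 := by
  classical
  rw [Nat.card_eq_fintype_card, Fintype.card_subtype]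
  have : (Finset.univ.filter fun v : Fin r => v ≠ v₁ ∧ v ≠ v₂) =
      Finset.univ \ {v₁, v₂} := by
    ext v
    simp [not_or]
  rw [this, Finset.card_sdiff_of_subset (by simp)]
  simp [Finset.card_insert_of_notMem, h12]

lemma card_gam (hm : 3 ≤ m) : Nat.card (Gam m) = 2 ^ (2 * m - 3) := by
  rw [Nat.card_eq_fintype_card]
  simp only [Gam, Fintype.card_prod, Fintype.card_fun, Fintype.card_bool, Fintype.card_fin]
  rw [← pow_add, ← pow_succ']
  congr 1
  omega

lemma card_bad (t : Bool) (hm : 3 ≤ m) :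
    Nat.card {g : Gam m // ¬ Bad t g} = 2 ^ (2 * m - 3) - 1 := by
  classical
  rw [Nat.card_eq_fintype_card]
  have he : ∀ g : Gam m, Bad t g ↔ g = (t, (fun _ => t), fun _ => t) := by
    intro g
    simp [Bad, Prod.ext_iff, funext_iff]
  have : Fintype.card {g : Gam m // Bad t g} = 1 := by
    simp_rw [he]
    exact Fintype.card_subtype_eq _
  have hc := Fintype.card_subtype_compl (fun g : Gam m => Bad t g)
  rw [hc, this, ← Nat.card_eq_fintype_card, card_gam hm]

lemma card_target (h12 : v₁ ≠ v₂) (hm : 3 ≤ m) :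
    Nat.card (Target r m v₁ v₂) =
      4 * (2 ^ (2 * m - 3)) ^ (r - 2) *
        Nat.card ({e : Sym2 (Fin r) // IsRest v₁ v₂ e} → Beta m) := by
  rw [Target, Nat.card_prod, Nat.card_prod, Nat.card_prod, Nat.card_fun,
    card_gam hm, card_S h12]
  simp [Nat.card_eq_fintype_card]
  ring

def TargetSet (t : Bool) (v₁ v₂ : Fin r) : Set (Target r m v₁ v₂) :=
  {x | x.1 = t ∧ x.2.1 = t ∧ ∀ w, ¬ Bad t (x.2.2.1 w)}

noncomputable def targetSetEquiv (t : Bool) :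
    TargetSet t v₁ v₂ (m := m) ≃
      (({v : Fin r // v ≠ v₁ ∧ v ≠ v₂} → {g : Gam m // ¬ Bad t g}) ×
        ({e : Sym2 (Fin r) // IsRest v₁ v₂ e} → Beta m)) where
  toFun x := ⟨fun w => ⟨x.1.2.2.1 w, x.2.2.2 w⟩, x.1.2.2.2⟩
  invFun p := ⟨(t, t, fun w => (p.1 w).1, p.2), rfl, rfl, fun w => (p.1 w).2⟩
  left_inv := by
    rintro ⟨⟨x1, x2, x3, x4⟩, h1, h2, h3⟩
    simp only at h1 h2 ⊢
    subst h1 h2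
    rfl
  right_inv p := rfl

lemma card_targetSet (t : Bool) (h12 : v₁ ≠ v₂) (hm : 3 ≤ m) :
    Nat.card (TargetSet t v₁ v₂ (m := m)) =
      (2 ^ (2 * m - 3) - 1) ^ (r - 2) *
        Nat.card ({e : Sym2 (Fin r) // IsRest v₁ v₂ e} → Beta m) := by
  rw [Nat.card_congr (targetSetEquiv t), Nat.card_prod, Nat.card_fun,
    card_bad t hm, card_S h12]

end Count

section PrPair
variable {r m : ℕ} {v₁ v₂ : Fin r}

lemma pr_pair (t : Bool) (h12 : v₁ ≠ v₂) (hm : 3 ≤ m) :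
    pr {ω : RandomOrientation r m | ω.1 v₁ = t ∧ ω.1 v₂ = t ∧
        ∀ v₃, v₃ ≠ v₁ → v₃ ≠ v₂ →
          ¬ (ω.1 v₃ = t ∧ (∀ i, ω.2 s(v₁, v₃) i = t) ∧ (∀ i, ω.2 s(v₂, v₃) i = t))} =
      (1 / 4) * (1 - 1 / 2 ^ (2 * m - 3)) ^ (r - 2) := by
  have equivE : {ω : RandomOrientation r m | ω.1 v₁ = t ∧ ω.1 v₂ = t ∧
      ∀ v₃, v₃ ≠ v₁ → v₃ ≠ v₂ →
        ¬ (ω.1 v₃ = t ∧ (∀ i, ω.2 s(v₁, v₃) i = t) ∧ (∀ i, ω.2 s(v₂, v₃) i = t))} ≃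
      TargetSet t v₁ v₂ (m := m) := by
    refine (PhiEquiv h12).subtypeEquiv fun ω => ?_
    simp only [Set.mem_setOf_eq, TargetSet, PhiEquiv, Equiv.coe_fn_mk, Phi, Bad]
    constructor
    · rintro ⟨h1, h2, h3⟩
      exact ⟨h1, h2, fun w => h3 w.1 w.2.1 w.2.2⟩
    · rintro ⟨h1, h2, h3⟩
      exact ⟨h1, h2, fun v₃ hv1 hv2 => h3 ⟨v₃, hv1, hv2⟩⟩
  have hΩ : Nat.card (RandomOrientation r m) =
      4 * (2 ^ (2 * m - 3)) ^ (r - 2) *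
        Nat.card ({e : Sym2 (Fin r) // IsRest v₁ v₂ e} → Beta m) := by
    rw [Nat.card_congr (PhiEquiv (m := m) h12), card_target h12 hm]
  rw [pr, Nat.card_congr equivE, card_targetSet t h12 hm, hΩ]
  have hK1 : (1:ℕ) ≤ 2 ^ (2 * m - 3) := Nat.one_le_two_pow
  have hRB : 0 < Nat.card ({e : Sym2 (Fin r) // IsRest v₁ v₂ e} → Beta m) :=
    Nat.card_pos
  have hKR : (0:ℝ) < ((2:ℝ) ^ (2 * m - 3)) := by positivity
  have hRBR : (0:ℝ) < (Nat.card ({e : Sym2 (Fin r) // IsRest v₁ v₂ e} → Beta m) : ℝ) := by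
    exact_mod_cast hRB
  have hsub : (((2 ^ (2 * m - 3) - 1 : ℕ)) : ℝ) = (2:ℝ) ^ (2 * m - 3) - 1 := by
    push_cast [Nat.cast_sub hK1]
    ring
  push_cast
  rw [hsub]
  have h1K : (1:ℝ) - 1 / 2 ^ (2 * m - 3) = ((2:ℝ) ^ (2 * m - 3) - 1) / 2 ^ (2 * m - 3) := by
    field_simp
  rw [h1K, div_pow]
  field_simp
end PrPair

section Final
variable {r m : ℕ}

def PairBody (t : Bool) (a b : Fin r) : Set (RandomOrientation r m) :=
  {ω | ω.1 a = t ∧ ω.1 b = t ∧ ∀ v₃, v₃ ≠ a → v₃ ≠ b →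
    ¬ (ω.1 v₃ = t ∧ (∀ i, ω.2 s(a, v₃) i = t) ∧ (∀ i, ω.2 s(b, v₃) i = t))}

lemma pr_pairBody (t : Bool) {a b : Fin r} (hab : a ≠ b) (hm : 3 ≤ m) :
    pr (PairBody t a b (m := m)) =
      (1 / 4) * (1 - 1 / 2 ^ (2 * m - 3)) ^ (r - 2) :=
  pr_pair t hab hm

lemma pairBody_symm (t : Bool) (a b : Fin r) :
    PairBody t a b (m := m) = PairBody t b a := by
  have key : ∀ a b : Fin r, PairBody t a b (m := m) ⊆ PairBody t b a := by
    rintro a b ω ⟨h1, h2, h3⟩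
    exact ⟨h2, h1, fun v₃ hb ha ⟨hc, hB, hA⟩ => h3 v₃ ha hb ⟨hc, hA, hB⟩⟩
  exact le_antisymm (key a b) (key b a)

def PairSet (t : Bool) (z : Sym2 (Fin r)) : Set (RandomOrientation r m) :=
  {ω | ∃ a b, s(a, b) = z ∧ a ≠ b ∧ ω ∈ PairBody t a b}

lemma pairSet_eq (t : Bool) {a b : Fin r} (hab : a ≠ b) :
    PairSet t s(a, b) (m := m) = PairBody t a b := by
  ext ω
  constructor
  · rintro ⟨a', b', hz, hne, hbody⟩
    rcases Sym2.eq_iff.mp hz with ⟨h1, h2⟩ | ⟨h1, h2⟩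
    · rwa [h1, h2] at hbody
    · rw [h1, h2] at hbody
      rwa [pairBody_symm] at hbody
  · intro hω
    exact ⟨a, b, rfl, hab, hω⟩

lemma pr_pairSet (t : Bool) {z : Sym2 (Fin r)} (hz : ¬ z.IsDiag) (hm : 3 ≤ m) :
    pr (PairSet t z (m := m)) =
      (1 / 4) * (1 - 1 / 2 ^ (2 * m - 3)) ^ (r - 2) := by
  induction z using Sym2.inductionOn with
  | hf a b =>
    have hab : a ≠ b := fun h => hz (by simp [h])
    rw [pairSet_eq t hab, pr_pairBody t hab hm]

end Final

/-- The probability that the ascending subgraph or the descending subgraph fails to be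
nonempty with every two vertices joined through a common neighbor is at most
`1/2^(r−1) + C(r,2) ⬝ (1/2) ⬝ (1 − 1/2^(2m−3))^(r−2)`. -/
theorem pr_ascending_or_descending_fails (r m : ℕ) (hr : 1 ≤ r) (hm : 3 ≤ m) :
    pr {ω : RandomOrientation r m |
        ((∀ v : Fin r, ¬ Asc ω v) ∨
          ∃ v₁ v₂ : Fin r, v₁ ≠ v₂ ∧ Asc ω v₁ ∧ Asc ω v₂ ∧
            ∀ v₃ : Fin r, v₃ ≠ v₁ → v₃ ≠ v₂ →
              ¬ (Asc ω v₃ ∧ EdgeAsc ω v₁ v₃ ∧ EdgeAsc ω v₂ v₃)) ∨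
        ((∀ v : Fin r, ¬ Desc ω v) ∨
          ∃ v₁ v₂ : Fin r, v₁ ≠ v₂ ∧ Desc ω v₁ ∧ Desc ω v₂ ∧
            ∀ v₃ : Fin r, v₃ ≠ v₁ → v₃ ≠ v₂ →
              ¬ (Desc ω v₃ ∧ EdgeDesc ω v₁ v₃ ∧ EdgeDesc ω v₂ v₃))}
      ≤ 1 / 2 ^ (r - 1)
          + (r.choose 2 : ℝ) * (1 / 2) * (1 - 1 / 2 ^ (2 * m - 3)) ^ (r - 2) := by
  classical
  set ND : Finset (Sym2 (Fin r)) := Finset.univ.filter (fun z => ¬ z.IsDiag) with hND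
  have hsub : {ω : RandomOrientation r m |
        ((∀ v : Fin r, ¬ Asc ω v) ∨
          ∃ v₁ v₂ : Fin r, v₁ ≠ v₂ ∧ Asc ω v₁ ∧ Asc ω v₂ ∧
            ∀ v₃ : Fin r, v₃ ≠ v₁ → v₃ ≠ v₂ →
              ¬ (Asc ω v₃ ∧ EdgeAsc ω v₁ v₃ ∧ EdgeAsc ω v₂ v₃)) ∨
        ((∀ v : Fin r, ¬ Desc ω v) ∨
          ∃ v₁ v₂ : Fin r, v₁ ≠ v₂ ∧ Desc ω v₁ ∧ Desc ω v₂ ∧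
            ∀ v₃ : Fin r, v₃ ≠ v₁ → v₃ ≠ v₂ →
              ¬ (Desc ω v₃ ∧ EdgeDesc ω v₁ v₃ ∧ EdgeDesc ω v₂ v₃))} ⊆
      (({ω : RandomOrientation r m | ∀ v, ω.1 v = false} ∪
          ⋃ z ∈ ND, PairSet true z) ∪
        ({ω : RandomOrientation r m | ∀ v, ω.1 v = true} ∪
          ⋃ z ∈ ND, PairSet false z)) := by
    rintro ω (h | h) <;> [skip; rcases h with h | h]
    · rcases h with h | ⟨a, b, hab, ha, hb, h3⟩
      · left; left
        intro v
        have := h v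
        simpa [Asc] using this
      · left; right
        exact Set.mem_biUnion (show s(a, b) ∈ ND by simp [hND, hab])
          (by
            rw [pairSet_eq true hab]
            exact ⟨ha, hb, fun v₃ h1 h2 hbad =>
              h3 v₃ h1 h2 ⟨hbad.1, ⟨ha, hbad.1, hbad.2.1⟩, ⟨hb, hbad.1, hbad.2.2⟩⟩⟩)
    · right; left
      intro v
      have := h v
      simpa [Desc] using this
    · obtain ⟨a, b, hab, ha, hb, h3⟩ := h
      right; right
      exact Set.mem_biUnion (show s(a, b) ∈ ND by simp [hND, hab])
        (by
          rw [pairSet_eq false hab]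
          exact ⟨ha, hb, fun v₃ h1 h2 hbad =>
            h3 v₃ h1 h2 ⟨hbad.1, ⟨ha, hbad.1, hbad.2.1⟩, ⟨hb, hbad.1, hbad.2.2⟩⟩⟩)
  refine le_trans (pr_mono hsub) (le_trans (pr_union_le _ _) ?_)
  have hcard : (ND.card : ℝ) = r.choose 2 := by
    have h1 := Sym2.card_subtype_not_diag (α := Fin r)
    rw [Fintype.card_subtype] at h1
    norm_cast
    rw [hND]
    simpa [Fintype.card_fin] using h1
  have hXnn : (0:ℝ) ≤ 1 - 1 / 2 ^ (2 * m - 3) := by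
    have h1 : (1:ℝ) / 2 ^ (2 * m - 3) ≤ 1 := by
      rw [div_le_one (by positivity)]
      have h2 := Nat.one_le_two_pow (n := 2*m-3)
      exact_mod_cast h2
    linarith
  have hbound : ∀ s t : Bool,
      pr ({ω : RandomOrientation r m | ∀ v, ω.1 v = s} ∪ ⋃ z ∈ ND, PairSet t z) ≤
        1 / 2 ^ r + (r.choose 2 : ℝ) * ((1/4) * (1 - 1 / 2 ^ (2 * m - 3)) ^ (r - 2)) := by
    intro s t
    refine le_trans (pr_union_le _ _) ?_
    rw [pr_const_coin s]
    refine add_le_add le_rfl ?_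
    refine le_trans (pr_biUnion_le ND _) ?_
    have : ∀ z ∈ ND, pr (PairSet t z (m := m)) =
        (1/4) * (1 - 1 / 2 ^ (2 * m - 3)) ^ (r - 2) := by
      intro z hz
      rw [hND, Finset.mem_filter] at hz
      exact pr_pairSet t hz.2 hm
    rw [Finset.sum_congr rfl this, Finset.sum_const, nsmul_eq_mul, hcard]
  have hb1 := hbound false true
  have hb2 := hbound true false
  have h2r : (2:ℝ) ^ r = 2 * 2 ^ (r - 1) := by
    rw [← pow_succ']
    congr 1
    omega
  have hfinal : (1:ℝ) / 2 ^ r + (r.choose 2 : ℝ) * ((1/4) * (1 - 1 / 2 ^ (2*m-3)) ^ (r-2))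
      + (1 / 2 ^ r + (r.choose 2 : ℝ) * ((1/4) * (1 - 1 / 2 ^ (2*m-3)) ^ (r-2)))
      = 1 / 2 ^ (r - 1)
        + (r.choose 2 : ℝ) * (1 / 2) * (1 - 1 / 2 ^ (2 * m - 3)) ^ (r - 2) := by
    rw [h2r]
    have hpos : (0:ℝ) < 2 ^ (r-1) := by positivity
    field_simp
    ring
  linarith [add_le_add hb1 hb2]
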